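/- Let $k$ be a field and let $x_1,\dots,x_m$ be variables. For the $m\times \binom{m+1}{2}$ matrix $\Phi(x)$ of linear forms representing the canonical map $S^2(W^*)\to W^*\otimes W^*$ evaluated at $x=(x_1,\dots,x_m)$ (i.e., the column indexed by $x_i x_j$ with $i\ne j$ is $x_i e_j + x_j e_i$, and the column indexed by $x_i^2$ is $x_i e_i$), every monomial of degree $m$ in $x_1,\dots,x_m$ occurs, up to sign, as a maximal ($m\times m$) minor of $\Phi(x)$. Consequently, the ideal of maximal minors of $\Phi(x)$ in $k[x_1,\dots,x_m]$ equals $(x_1,\dots,x_m)^m$. -/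

import Mathlib

open MvPolynomial Pointwise

noncomputable section

/-- The matrix `Φ(x)` of linear forms representing the canonical map
`S²(W*) → W* ⊗ W*`: rows indexed by `Fin m`, columns by unordered pairs `{i,j}`;
the column indexed by `xᵢxⱼ` (`i ≠ j`) is `xᵢ eⱼ + xⱼ eᵢ` and the column indexed
by `xᵢ²` is `xᵢ eᵢ`. -/
def Phi (k : Type*) [Field k] (m : ℕ) :
    Matrix (Fin m) {p : Fin m × Fin m // p.1 ≤ p.2} (MvPolynomial (Fin m) k) :=
  fun l c =>
    if c.1.1 = c.1.2 then (if l = c.1.1 then X c.1.1 else 0)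
    else (if l = c.1.2 then X c.1.1 else 0) + (if l = c.1.1 then X c.1.2 else 0)

/-- Determinant of the matrix with diagonal `X (j l)` and the only other nonzero entry
of column `l` being `X l` at row `j l`, for a monotone `j`. -/
lemma det_of_monotone {k : Type*} [Field k] {m : ℕ} (j : Fin m → Fin m) (hm : Monotone j) :
    (Matrix.of fun r l : Fin m =>
      if r = l then (X (j l) : MvPolynomial (Fin m) k)
      else if r = j l then X l else 0).det = ∏ l, X (j l) := by
  rw [Matrix.det_apply']
  rw [Finset.sum_eq_single (1 : Equiv.Perm (Fin m))]
  · simp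
  · intro σ _ hσ
    by_cases hall : ∀ l, σ l = l ∨ σ l = j l
    · exfalso
      apply hσ
      have key : ∀ n (l : Fin m), l.val = n → σ l = l := by
        intro n
        induction n using Nat.strong_induction_on with
        | _ n ih =>
          intro l hl
          rcases hall l with h | h
          · exact h
          · by_cases hjl : j l = l
            · rw [h, hjl]
            · rcases lt_or_gt_of_ne hjl with hlt | hgt
              · have h2 : σ (j l) = j l := ih (j l).val (by rw [← hl]; exact hlt) (j l) rfl
                exact absurd (σ.injective (h.trans h2.symm)) (fun e => hjl e.symm)
              · obtain ⟨l', hl'⟩ : ∃ l', σ l' = l := ⟨σ.symm l, Equiv.apply_symm_apply _ _⟩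
                have hne : l' ≠ l := by
                  intro e; rw [e, h] at hl'; exact hjl hl'
                rcases hall l' with h' | h'
                · exact absurd (h'.symm.trans hl') hne
                · have hjl' : j l' = l := h' ▸ hl'
                  by_cases hlt' : l'.val < l.val
                  · exact absurd ((ih l'.val (hl ▸ hlt') l' rfl).symm.trans (h'.trans hjl')) hne
                  · have hll' : l < l' := lt_of_le_of_ne (Fin.le_def.mpr (Nat.le_of_not_lt hlt')) (Ne.symm hne)
                    have : j l ≤ l := le_of_le_of_eq (hm hll'.le) hjl'
                    exact absurd hgt (not_lt.mpr this)
      exact Equiv.ext fun l => key l.val l rfl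
    · push_neg at hall
      obtain ⟨l, h1, h2⟩ := hall
      rw [Finset.prod_eq_zero (Finset.mem_univ l) (by simp [h1, h2]), mul_zero]
  · intro h; exact absurd (Finset.mem_univ _) h

/-- Core construction: for any multiset `M` of `m` variable indices, the product of the
corresponding variables is exactly a maximal minor of `Φ(x)`. -/
lemma core {k : Type*} [Field k] {m : ℕ} (M : Multiset (Fin m)) (hM : Multiset.card M = m) :
    ∃ s : Fin m → {p : Fin m × Fin m // p.1 ≤ p.2}, Function.Injective s ∧
      ((Phi k m).submatrix id s).det = (M.map X).prod := by
  classical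
  set L := M.sort (· ≤ ·) with hL
  have hlen : L.length = m := by rw [hL, Multiset.length_sort, hM]
  set j : Fin m → Fin m := fun l => L.get ⟨l.val, by rw [hlen]; exact l.isLt⟩ with hj
  have hsorted : L.Pairwise (· ≤ ·) := Multiset.pairwise_sort _ _
  have hmono : Monotone j := by
    intro a b hab
    rcases eq_or_lt_of_le hab with h | h
    · rw [h]
    · exact (List.pairwise_iff_get.mp hsorted) _ _ (Fin.mk_lt_mk.mpr h)
  set s : Fin m → {p : Fin m × Fin m // p.1 ≤ p.2} := fun l =>
    if h : j l ≤ l then ⟨(j l, l), h⟩ else ⟨(l, j l), le_of_not_ge h⟩ with hsdef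
  have cross : ∀ a b : Fin m, j a = b → j b = a → a = b := by
    intro a b h1 h2
    rcases le_total a b with h | h
    · have h3 := hmono h; rw [h1, h2] at h3; exact le_antisymm h h3
    · have h3 := hmono h; rw [h2, h1] at h3; exact le_antisymm h3 h
  have hinj : Function.Injective s := by
    intro a b hab
    rw [hsdef] at hab
    simp only at hab
    split_ifs at hab with h1 h2 h2 <;>
      simp only [Subtype.mk.injEq, Prod.mk.injEq] at hab
    · exact hab.2
    · exact cross a b hab.1 hab.2.symm
    · exact cross a b hab.2 hab.1.symm
    · exact hab.1
  have hmat : (Phi k m).submatrix id s = Matrix.of fun r l =>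
      if r = l then (X (j l) : MvPolynomial (Fin m) k) else if r = j l then X l else 0 := by
    apply Matrix.ext
    intro r l
    simp only [Matrix.submatrix_apply, id_eq, Matrix.of_apply, hsdef]
    by_cases hle : j l ≤ l
    · rw [dif_pos hle]
      by_cases hjl : j l = l
      · simp only [Phi, hjl, if_pos rfl]
        split_ifs <;> rfl
      · simp only [Phi, if_neg hjl]
        split_ifs with h1 h2 h2 <;>
          first | exact absurd (h2.symm.trans h1) hjl | simp
    · rw [dif_neg hle]
      have hjl : l ≠ j l := fun e => hle (le_of_eq e.symm)
      simp only [Phi, if_neg hjl]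
      split_ifs with h1 h2 h2 <;>
        first | exact absurd (h1.symm.trans h2) (Ne.symm hjl) | simp
  refine ⟨s, hinj, ?_⟩
  rw [hmat, det_of_monotone j hmono]
  have h1 : (List.ofFn fun l : Fin m => (X (j l) : MvPolynomial (Fin m) k)) = L.map X := by
    apply List.ext_getElem
    · simp [hlen]
    · intro n hn1 hn2
      simp only [List.getElem_ofFn, List.getElem_map]
      rfl
  calc ∏ l, (X (j l) : MvPolynomial (Fin m) k)
      = (List.ofFn fun l : Fin m => (X (j l) : MvPolynomial (Fin m) k)).prod :=
        List.prod_ofFn.symm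
    _ = (L.map X).prod := by rw [h1]
    _ = (M.map X).prod := by
        rw [← Multiset.sort_eq M (· ≤ ·)]
        rw [Multiset.map_coe, Multiset.prod_coe]

/-- `span S ^ n = span (S ^ n)`. -/
lemma span_pow_eq {R : Type*} [CommRing R] (S : Set R) (n : ℕ) :
    Ideal.span S ^ n = Ideal.span (S ^ n) := by
  induction n with
  | zero => simp [Ideal.one_eq_top]
  | succ n ih => rw [pow_succ, pow_succ, ih, Ideal.span_mul_span']

theorem minors_of_Phi (k : Type*) [Field k] (m : ℕ) :
    (∀ d : Fin m → ℕ, (∑ i, d i) = m →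
      ∃ s : Fin m → {p : Fin m × Fin m // p.1 ≤ p.2}, Function.Injective s ∧
        (((Phi k m).submatrix id s).det = ∏ i, (X i : MvPolynomial (Fin m) k) ^ d i ∨
         ((Phi k m).submatrix id s).det = -∏ i, (X i : MvPolynomial (Fin m) k) ^ d i)) ∧
    Ideal.span {p : MvPolynomial (Fin m) k |
        ∃ s : Fin m → {p : Fin m × Fin m // p.1 ≤ p.2}, Function.Injective s ∧
          p = ((Phi k m).submatrix id s).det} =
      (Ideal.span (Set.range (X : Fin m → MvPolynomial (Fin m) k))) ^ m := by
  classical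
  constructor
  · intro d hd
    obtain ⟨s, hs, hdet⟩ := core (k := k)
      (Finset.univ.val.bind fun i => Multiset.replicate (d i) i)
      (by rw [Multiset.card_bind]; simp only [Function.comp_def, Multiset.card_replicate]; exact hd)
    refine ⟨s, hs, Or.inl ?_⟩
    rw [hdet, Multiset.map_bind]
    rw [Multiset.prod_bind]
    simp only [Function.comp, Multiset.map_replicate, Multiset.prod_replicate]
    rfl
  · have hXmem : ∀ i, (X i : MvPolynomial (Fin m) k) ∈
        Ideal.span (Set.range (X : Fin m → MvPolynomial (Fin m) k)) :=
      fun i => Ideal.subset_span ⟨i, rfl⟩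
    apply le_antisymm
    · rw [Ideal.span_le]
      rintro p ⟨s, hs, rfl⟩
      show ((Phi k m).submatrix id s).det ∈ _
      rw [Matrix.det_apply']
      apply Ideal.sum_mem
      intro σ _
      apply Ideal.mul_mem_left
      have hpow : (Ideal.span (Set.range (X : Fin m → MvPolynomial (Fin m) k))) ^ m =
          ∏ _i : Fin m, Ideal.span (Set.range (X : Fin m → MvPolynomial (Fin m) k)) := by
        rw [Finset.prod_const, Finset.card_univ, Fintype.card_fin]
      rw [hpow]
      apply Ideal.prod_mem_prod
      intro i _
      simp only [Matrix.submatrix_apply, id_eq, Phi]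
      split_ifs <;>
        first
          | exact hXmem _
          | exact Ideal.zero_mem _
          | exact Ideal.add_mem _ (hXmem _) (hXmem _)
          | exact Ideal.add_mem _ (hXmem _) (Ideal.zero_mem _)
          | exact Ideal.add_mem _ (Ideal.zero_mem _) (hXmem _)
          | exact Ideal.add_mem _ (Ideal.zero_mem _) (Ideal.zero_mem _)
    · rw [span_pow_eq, Ideal.span_le]
      intro p hp
      rw [Set.mem_pow] at hp
      obtain ⟨f, hf⟩ := hp
      choose g hg using fun i => (f i).2
      obtain ⟨s, hs, hdet⟩ := core (k := k) ((List.ofFn g : List (Fin m)) : Multiset (Fin m)) (by simp)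
      have hp' : p = ((Phi k m).submatrix id s).det := by
        rw [hdet, ← hf, Multiset.map_coe, Multiset.prod_coe, List.map_ofFn]
        have : (fun i => (↑(f i) : MvPolynomial (Fin m) k)) = X ∘ g := by
          funext i; exact (hg i).symm
        rw [this]
      exact Ideal.subset_span ⟨s, hs, hp'⟩
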